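/- Let r ≥ 2 and let κ be a nontrivial element of the cyclic group of order r. The number of ways to write κ as an ordered product of m nontrivial elements of the group equals ((r-1)^m - (-1)^m) / r. -/

import Mathlib

/-- `cyclicFac r m κ` is the number of `m`-tuples of nonzero elements of the
additive cyclic group `ZMod r` whose sum is `κ`. -/
noncomputable def cyclicFac (r m : ℕ) (κ : ZMod r) : ℕ :=
  Nat.card {t : Fin m → ZMod r // (∀ i, t i ≠ 0) ∧ ∑ i, t i = κ}

open Finset

private def cfS (r m : ℕ) [NeZero r] (κ : ZMod r) : Finset (Fin m → ZMod r) :=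
  univ.filter fun t => (∀ i, t i ≠ 0) ∧ ∑ i, t i = κ

private lemma cyclicFac_eq_card (r m : ℕ) [NeZero r] (κ : ZMod r) :
    cyclicFac r m κ = (cfS r m κ).card := by
  rw [cyclicFac, Nat.card_eq_fintype_card, Fintype.card_subtype, cfS]

private lemma cfS_total (r m : ℕ) [NeZero r] :
    ∑ κ : ZMod r, (cfS r m κ).card = (r - 1) ^ m := by
  have h1 : (univ.filter fun t : Fin m → ZMod r => ∀ i, t i ≠ 0).card = (r - 1) ^ m := by
    rw [← Fintype.card_subtype]
    rw [Fintype.card_congr (Equiv.subtypePiEquivPi (p := fun (_ : Fin m) (b : ZMod r) => b ≠ 0))]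
    rw [Fintype.card_pi]
    have : Fintype.card {b : ZMod r // b ≠ 0} = r - 1 := by
      rw [Fintype.card_subtype_compl, ZMod.card]
      simp
    simp [this]
  rw [← h1]
  rw [Finset.card_eq_sum_card_fiberwise (f := fun t : Fin m → ZMod r => ∑ i, t i)
    (t := univ) (fun a _ => mem_univ _)]
  refine Finset.sum_congr rfl fun κ _ => ?_
  congr 1
  rw [cfS, Finset.filter_filter]

private lemma cfS_rec (r m : ℕ) [NeZero r] (κ : ZMod r) :
    (cfS r (m + 1) κ).card + (cfS r m κ).card = (r - 1) ^ m := by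
  have hfib : (cfS r (m + 1) κ).card =
      ∑ x : ZMod r, ((cfS r (m + 1) κ).filter fun t => t 0 = x).card :=
    Finset.card_eq_sum_card_fiberwise (fun a _ => mem_univ _)
  have hx0 : ((cfS r (m + 1) κ).filter fun t => t 0 = (0 : ZMod r)).card = 0 := by
    rw [Finset.card_eq_zero, Finset.eq_empty_iff_forall_notMem]
    intro t ht
    simp only [cfS, Finset.mem_filter, Finset.mem_univ, true_and] at ht
    exact ht.1.1 0 ht.2
  have hx : ∀ x : ZMod r, x ≠ 0 →
      ((cfS r (m + 1) κ).filter fun t => t 0 = x).card = (cfS r m (κ - x)).card := by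
    intro x hx
    refine Finset.card_nbij' (fun t => Fin.tail t) (fun s => Fin.cons x s) ?_ ?_ ?_ ?_
    · intro t ht
      simp only [Finset.mem_coe, cfS, Finset.mem_filter, Finset.mem_univ, true_and] at ht ⊢
      obtain ⟨⟨hne, hsum⟩, h0⟩ := ht
      refine ⟨fun i => hne i.succ, ?_⟩
      rw [Fin.sum_univ_succ] at hsum
      rw [← hsum, h0]
      ring_nf
      rfl
    · intro s hs
      simp only [Finset.mem_coe, cfS, Finset.mem_filter, Finset.mem_univ, true_and] at hs ⊢
      obtain ⟨hne, hsum⟩ := hs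
      refine ⟨⟨fun i => ?_, ?_⟩, ?_⟩
      · refine Fin.cases ?_ ?_ i
        · simpa using hx
        · intro j; simpa using hne j
      · rw [Fin.sum_univ_succ]
        simp [hsum]
      · simp
    · intro t ht
      simp only [Finset.mem_coe, cfS, Finset.mem_filter, Finset.mem_univ, true_and] at ht
      show Fin.cons x (Fin.tail t) = t
      rw [← ht.2, Fin.cons_self_tail]
    · intro s _
      exact Fin.tail_cons _ _
  have step1 : (cfS r (m + 1) κ).card = ∑ x ∈ univ.erase (0 : ZMod r), (cfS r m (κ - x)).card := by
    rw [hfib, ← Finset.sum_erase (univ : Finset (ZMod r)) hx0]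
    exact Finset.sum_congr rfl fun x hxm => hx x (Finset.ne_of_mem_erase hxm)
  have step2 : ∑ x ∈ univ.erase (0 : ZMod r), (cfS r m (κ - x)).card =
      ∑ y ∈ univ.erase κ, (cfS r m y).card := by
    refine Finset.sum_nbij' (fun x => κ - x) (fun y => κ - y) ?_ ?_ ?_ ?_ ?_
    · intro a ha
      simp only [Finset.mem_erase, Finset.mem_univ, and_true] at ha ⊢
      intro h
      exact ha (sub_eq_self.mp h)
    · intro y hy
      simp only [Finset.mem_erase, Finset.mem_univ, and_true] at hy ⊢
      intro h
      exact hy ((sub_eq_zero.mp h).symm)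
    · intro a _; simp
    · intro y _; simp
    · intro a _; rfl
  have step3 : (cfS r m κ).card + ∑ y ∈ univ.erase κ, (cfS r m y).card = (r - 1) ^ m := by
    rw [← cfS_total r m]
    exact Finset.add_sum_erase univ (fun y => (cfS r m y).card) (mem_univ κ)
  rw [step1, step2, add_comm]
  exact step3

theorem cfS_zero (r : ℕ) [NeZero r] (κ : ZMod r) (hκ : κ ≠ 0) : (cfS r 0 κ).card = 0 := by
  rw [Finset.card_eq_zero, Finset.eq_empty_iff_forall_notMem]
  intro t ht
  simp only [cfS, Finset.mem_filter, Finset.mem_univ, true_and] at ht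
  exact hκ (ht.2.symm.trans (by simp))

/-- For `r ≥ 2` and a nontrivial element `κ` of the cyclic group of order `r`,
the number of ways to write `κ` as an ordered product of `m` nontrivial
elements equals `((r-1)^m - (-1)^m)/r`. -/
theorem cyclicFac_ne_one (r : ℕ) (hr : 2 ≤ r) (κ : ZMod r) (hκ : κ ≠ 0) (m : ℕ) :
    (r : ℤ) * cyclicFac r m κ = ((r : ℤ) - 1) ^ m - (-1) ^ m := by
  haveI : NeZero r := ⟨by omega⟩
  induction m with
  | zero => simp [cyclicFac_eq_card, cfS_zero r κ hκ]
  | succ m ih =>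
    have hrec := cfS_rec r m κ
    have hcast : ((r : ℤ) - 1) = ((r - 1 : ℕ) : ℤ) := by
      push_cast [Nat.cast_sub (by omega : 1 ≤ r)]; ring
    rw [cyclicFac_eq_card] at ih ⊢
    have : ((cfS r (m + 1) κ).card : ℤ) = ((r - 1 : ℕ) ^ m : ℕ) - (cfS r m κ).card := by
      omega
    rw [this]
    push_cast [← hcast]
    rw [mul_sub, ih]
    ring
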